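/- Suppose E_n(z) is analytic in the disc {|z| ≤ r}, E_n(0) = n², and |Im E_n(z)| ≤ σ r on that disc. Then (1/2π)∫₀^{2π} |E_n(r e^{it}) − n²| dt ≤ √2 σ r, and consequently the k-th Taylor coefficient a_k of E_n at 0 satisfies |a_k| ≤ √2 σ / r^{k−1} for every k ≥ 1. -/

import Mathlib

open scoped Real
open Metric

noncomputable section

/-- Meixner–Schäfke type estimates (Section 8 of the paper): if `E` is analytic
on the closed disc of radius `r`, `E(0) = n²`, and `|Im E(z)| ≤ σ r` on the disc, then the
mean of `|E − n²|` on the circle of radius `r` is at most `√2 σ r`, and hence the Taylor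
coefficients `a_k = E^{(k)}(0)/k!` satisfy `|a_k| ≤ √2 σ / r^{k−1}` for `k ≥ 1`. -/
theorem analytic_imaginary_part_bound (n : ℕ) (r σ : ℝ) (hr : 0 < r) (hσ : 0 ≤ σ)
    (E : ℂ → ℂ) (hE : DifferentiableOn ℂ E (Metric.closedBall 0 r))
    (hE0 : E 0 = ((n : ℝ) ^ 2 : ℂ))
    (hIm : ∀ z ∈ Metric.closedBall (0 : ℂ) r, |(E z).im| ≤ σ * r) :
    (1 / (2 * π)) *
        (∫ t in (0 : ℝ)..(2 * π), ‖E ((r : ℂ) * Complex.exp (Complex.I * (t : ℂ))) -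
          ((n : ℝ) ^ 2 : ℂ)‖) ≤ Real.sqrt 2 * σ * r ∧
      ∀ k : ℕ, 1 ≤ k →
        ‖iteratedDeriv k E 0 / (Nat.factorial k : ℂ)‖ ≤ Real.sqrt 2 * σ / r ^ (k - 1) := by
  have pi_pos := Real.pi_pos
  set c : ℂ := ((n : ℝ) ^ 2 : ℂ) with hcdef
  set F : ℂ → ℂ := fun z => E z - c with hFdef
  have hF : DifferentiableOn ℂ F (Metric.closedBall 0 r) := hE.sub_const c
  have hF0 : F 0 = 0 := by simp [hFdef, hE0]
  have hcm : ∀ t : ℝ, (r : ℂ) * Complex.exp (Complex.I * (t : ℂ)) = circleMap 0 r t := by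
    intro t; simp [circleMap, mul_comm]
  have hmem : ∀ θ : ℝ, circleMap 0 r θ ∈ Metric.closedBall (0 : ℂ) r := fun θ =>
    sphere_subset_closedBall (circleMap_mem_sphere (0:ℂ) hr.le θ)
  have hcont : Continuous fun θ : ℝ => F (circleMap 0 r θ) :=
    (hF.continuousOn).comp_continuous (continuous_circleMap 0 r) hmem
  -- the circle integral of F^2 vanishes
  have hG : DiffContOnCl ℂ (fun z => F z * F z) (Metric.ball (0:ℂ) r) := by
    have : DifferentiableOn ℂ (fun z => F z * F z) (closure (Metric.ball (0:ℂ) r)) := by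
      rw [closure_ball (0:ℂ) hr.ne']
      exact hF.mul hF
    exact this.diffContOnCl
  have hzero : (∮ z in C(0, r), (z - 0)⁻¹ • (F z * F z)) = (2 * π * Complex.I : ℂ) • (F 0 * F 0) :=
    hG.circleIntegral_sub_inv_smul (by simpa using hr)
  have h1 : (∮ z in C(0, r), (z - 0)⁻¹ • (F z * F z)) =
      ∫ θ in (0:ℝ)..2*π, Complex.I * (F (circleMap 0 r θ) * F (circleMap 0 r θ)) := by
    simp only [circleIntegral, deriv_circleMap, sub_zero, smul_eq_mul]
    refine intervalIntegral.integral_congr fun θ _ => ?_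
    have hz : circleMap 0 r θ ≠ 0 := circleMap_ne_center hr.ne'
    field_simp
  have hGint : IntervalIntegrable (fun θ => F (circleMap 0 r θ) * F (circleMap 0 r θ))
      MeasureTheory.volume 0 (2*π) := (hcont.mul hcont).intervalIntegrable _ _
  have hint0 : (∫ θ in (0:ℝ)..2*π, F (circleMap 0 r θ) * F (circleMap 0 r θ)) = 0 := by
    have := h1.symm.trans hzero
    rw [intervalIntegral.integral_const_mul] at this
    simp only [hF0, mul_zero, smul_zero] at this
    exact (mul_eq_zero.mp this).resolve_left Complex.I_ne_zero
  have hre0 : (∫ θ in (0:ℝ)..2*π, (F (circleMap 0 r θ) * F (circleMap 0 r θ)).re) = 0 := by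
    have := Complex.reCLM.intervalIntegral_comp_comm hGint
    simp only [Complex.reCLM_apply] at this
    rw [this, hint0, Complex.zero_re]
  have hreC : Continuous fun θ : ℝ => (F (circleMap 0 r θ)).re := Complex.continuous_re.comp hcont
  have himC : Continuous fun θ : ℝ => (F (circleMap 0 r θ)).im := Complex.continuous_im.comp hcont
  have hreInt : IntervalIntegrable (fun θ : ℝ => (F (circleMap 0 r θ)).re ^ 2)
      MeasureTheory.volume 0 (2*π) := (hreC.pow 2).intervalIntegrable _ _
  have himInt : IntervalIntegrable (fun θ : ℝ => (F (circleMap 0 r θ)).im ^ 2)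
      MeasureTheory.volume 0 (2*π) := (himC.pow 2).intervalIntegrable _ _
  have hre_eq_im : (∫ θ in (0:ℝ)..2*π, (F (circleMap 0 r θ)).re ^ 2) =
      ∫ θ in (0:ℝ)..2*π, (F (circleMap 0 r θ)).im ^ 2 := by
    have h2 : (∫ θ in (0:ℝ)..2*π, ((F (circleMap 0 r θ)).re ^ 2 - (F (circleMap 0 r θ)).im ^ 2))
        = ∫ θ in (0:ℝ)..2*π, (F (circleMap 0 r θ) * F (circleMap 0 r θ)).re :=
      intervalIntegral.integral_congr fun θ _ => by simp [Complex.mul_re, sq]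
    have h3 := intervalIntegral.integral_sub hreInt himInt
    rw [h2, hre0] at h3
    linarith
  -- bound on the imaginary part squared
  have him_bdd : ∀ θ : ℝ, (F (circleMap 0 r θ)).im ^ 2 ≤ (σ * r) ^ 2 := by
    intro θ
    have hcim : c.im = 0 := by simp [hcdef, pow_two, Complex.mul_im]
    have h1 : (F (circleMap 0 r θ)).im = (E (circleMap 0 r θ)).im := by
      simp [hFdef, Complex.sub_im, hcim]
    rw [h1]
    have := hIm _ (hmem θ)
    nlinarith [abs_nonneg (E (circleMap 0 r θ)).im, le_abs_self (E (circleMap 0 r θ)).im,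
      neg_abs_le (E (circleMap 0 r θ)).im]
  have him_int_bdd : (∫ θ in (0:ℝ)..2*π, (F (circleMap 0 r θ)).im ^ 2) ≤ 2*π*(σ*r)^2 := by
    have := intervalIntegral.integral_mono_on (by positivity : (0:ℝ) ≤ 2*π) himInt
      (intervalIntegrable_const) (fun θ _ => him_bdd θ)
    simpa using this
  -- norm squared bound
  have hnormInt : IntervalIntegrable (fun θ : ℝ => ‖F (circleMap 0 r θ)‖ ^ 2)
      MeasureTheory.volume 0 (2*π) := ((hcont.norm).pow 2).intervalIntegrable _ _
  have hnorm2 : (∫ θ in (0:ℝ)..2*π, ‖F (circleMap 0 r θ)‖ ^ 2) ≤ 2*(2*π*(σ*r)^2) := by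
    have heq : (∫ θ in (0:ℝ)..2*π, ‖F (circleMap 0 r θ)‖ ^ 2) =
        (∫ θ in (0:ℝ)..2*π, (F (circleMap 0 r θ)).re ^ 2) +
        (∫ θ in (0:ℝ)..2*π, (F (circleMap 0 r θ)).im ^ 2) := by
      rw [← intervalIntegral.integral_add hreInt himInt]
      refine intervalIntegral.integral_congr fun θ _ => ?_
      rw [← Complex.normSq_eq_norm_sq, Complex.normSq_apply]
      ring
    rw [heq, hre_eq_im]
    linarith [him_int_bdd]
  -- the mean bound
  have hJ : (∫ θ in (0:ℝ)..2*π, ‖F (circleMap 0 r θ)‖) ≤ 2*π*(Real.sqrt 2 * σ * r) := by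
    refine le_of_forall_pos_le_add fun ε hε => ?_
    set b : ℝ := Real.sqrt 2 * σ * r + ε/(2*π) with hbdef
    have hb0 : 0 < b := by positivity
    have hs2 : Real.sqrt 2 ^ 2 = 2 := Real.sq_sqrt (by norm_num)
    have hptw : ∀ θ : ℝ, ‖F (circleMap 0 r θ)‖ ≤ ‖F (circleMap 0 r θ)‖^2/(2*b) + b/2 := by
      intro θ
      rw [div_add_div _ _ (by positivity : (2*b:ℝ) ≠ 0) (by norm_num : (2:ℝ) ≠ 0),
        le_div_iff₀ (by positivity)]
      nlinarith [sq_nonneg (‖F (circleMap 0 r θ)‖ - b)]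
    have hnormInt' : IntervalIntegrable (fun θ : ℝ => ‖F (circleMap 0 r θ)‖^2/(2*b) + b/2)
        MeasureTheory.volume 0 (2*π) :=
      ((((hcont.norm).pow 2).div_const _).add continuous_const).intervalIntegrable _ _
    have step1 : (∫ θ in (0:ℝ)..2*π, ‖F (circleMap 0 r θ)‖) ≤
        ∫ θ in (0:ℝ)..2*π, (‖F (circleMap 0 r θ)‖^2/(2*b) + b/2) :=
      intervalIntegral.integral_mono_on (by positivity) ((hcont.norm).intervalIntegrable _ _)
        hnormInt' (fun θ _ => hptw θ)
    have step2 : (∫ θ in (0:ℝ)..2*π, (‖F (circleMap 0 r θ)‖^2/(2*b) + b/2)) =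
        (∫ θ in (0:ℝ)..2*π, ‖F (circleMap 0 r θ)‖^2)/(2*b) + (2*π)*(b/2) := by
      rw [intervalIntegral.integral_add ((hnormInt).div_const _) intervalIntegrable_const,
        intervalIntegral.integral_div, intervalIntegral.integral_const]
      simp
    have step3 : (∫ θ in (0:ℝ)..2*π, ‖F (circleMap 0 r θ)‖^2)/(2*b) ≤ π * (Real.sqrt 2 * σ * r) := by
      rw [div_le_iff₀ (by positivity)]
      have hb' : Real.sqrt 2 * σ * r ≤ b := by
        rw [hbdef]; nlinarith [div_pos hε (by positivity : (0:ℝ) < 2*π)]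
      have key : 2*(σ*r)^2 ≤ (Real.sqrt 2 * σ * r) * b := by
        nlinarith [hs2, hb', mul_nonneg (mul_nonneg (Real.sqrt_nonneg 2) hσ) hr.le]
      nlinarith [hnorm2, mul_le_mul_of_nonneg_left key pi_pos.le]
    calc (∫ θ in (0:ℝ)..2*π, ‖F (circleMap 0 r θ)‖) ≤
        (∫ θ in (0:ℝ)..2*π, ‖F (circleMap 0 r θ)‖^2)/(2*b) + (2*π)*(b/2) := by
          rw [← step2]; exact step1
      _ ≤ π * (Real.sqrt 2 * σ * r) + (π * b) := by
          have hb2 : (2*π)*(b/2) = π * b := by ring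
          linarith [step3]
      _ ≤ 2*π*(Real.sqrt 2 * σ * r) + ε := by
          rw [hbdef]
          have : π * (ε/(2*π)) = ε/2 := by field_simp
          nlinarith [hε]
  constructor
  · have heq : (∫ t in (0:ℝ)..2*π, ‖E ((r : ℂ) * Complex.exp (Complex.I * (t : ℂ))) - c‖) =
        ∫ θ in (0:ℝ)..2*π, ‖F (circleMap 0 r θ)‖ := by
      refine intervalIntegral.integral_congr fun t _ => ?_
      rw [hcm t]
    rw [heq]
    calc (1 / (2*π)) * (∫ θ in (0:ℝ)..2*π, ‖F (circleMap 0 r θ)‖)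
        ≤ (1 / (2*π)) * (2*π*(Real.sqrt 2 * σ * r)) :=
          mul_le_mul_of_nonneg_left hJ (by positivity)
      _ = Real.sqrt 2 * σ * r := by field_simp
  · intro k hk
    obtain ⟨m, rfl⟩ : ∃ m, k = m + 1 := ⟨k - 1, (Nat.succ_pred_eq_of_pos hk).symm⟩
    set k := m + 1 with hkdef
    have hFb := hF.hasFPowerSeriesOnBall (R := ⟨r, hr.le⟩) (by exact_mod_cast hr)
    have hder : iteratedDeriv k E 0 = iteratedDeriv k F 0 := by
      rw [iteratedDeriv_succ', iteratedDeriv_succ']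
      congr 1
      funext x
      simp [hFdef, deriv_sub_const]
    have hfac := hFb.factorial_smul (1 : ℂ) k
    simp only [NNReal.coe_mk] at hfac
    have hcoeff : iteratedDeriv k F 0 =
        ((Nat.factorial k : ℕ) : ℂ) * (cauchyPowerSeries F 0 r k fun _ => 1) := by
      rw [iteratedDeriv_eq_iteratedFDeriv, ← hfac, nsmul_eq_mul]
      rfl
    have hfk : ((Nat.factorial k : ℕ) : ℂ) ≠ 0 := Nat.cast_ne_zero.mpr k.factorial_ne_zero
    have hval : iteratedDeriv k E 0 / ((Nat.factorial k : ℕ) : ℂ) =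
        cauchyPowerSeries F 0 r k fun _ => 1 := by
      rw [hder, hcoeff, mul_div_cancel_left₀ _ hfk]
    rw [hval]
    have h1 : ‖cauchyPowerSeries F 0 r k fun _ => 1‖ ≤ ‖cauchyPowerSeries F 0 r k‖ := by
      simpa using (cauchyPowerSeries F 0 r k).le_opNorm (fun _ => (1 : ℂ))
    have h2 := norm_cauchyPowerSeries_le F 0 r k
    have h3 : ((2 * π)⁻¹ * ∫ θ in (0:ℝ)..2*π, ‖F (circleMap 0 r θ)‖) ≤
        Real.sqrt 2 * σ * r := by
      have h2π : (0:ℝ) < 2 * π := by positivity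
      calc (2 * π)⁻¹ * (∫ θ in (0:ℝ)..2*π, ‖F (circleMap 0 r θ)‖)
          ≤ (2 * π)⁻¹ * (2*π*(Real.sqrt 2 * σ * r)) :=
            mul_le_mul_of_nonneg_left hJ (by positivity)
        _ = Real.sqrt 2 * σ * r := by field_simp
    have h4 : (Real.sqrt 2 * σ * r) * |r|⁻¹ ^ k = Real.sqrt 2 * σ / r ^ (k - 1) := by
      rw [abs_of_pos hr]
      have : k - 1 = m := rfl
      rw [this]
      rw [inv_pow, hkdef]
      field_simp [pow_succ]
      ring
    calc ‖cauchyPowerSeries F 0 r k fun _ => 1‖ ≤ ‖cauchyPowerSeries F 0 r k‖ := h1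
      _ ≤ ((2 * π)⁻¹ * ∫ θ in (0:ℝ)..2*π, ‖F (circleMap 0 r θ)‖) * |r|⁻¹ ^ k := h2
      _ ≤ (Real.sqrt 2 * σ * r) * |r|⁻¹ ^ k :=
          mul_le_mul_of_nonneg_right h3 (by positivity)
      _ = Real.sqrt 2 * σ / r ^ (k - 1) := h4
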